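/- On the Legendre elliptic curve E_6 over the complex numbers, given by the affine equation y² = x(x−1)(x−6), any point P = (2, y₀) with y₀² = −8 has infinite order in the group of points: for every nonzero integer n, the multiple n•P is not the point at infinity. -/

import Mathlib

open WeierstrassCurve

/-- The Legendre elliptic curve `E₆ : y² = x(x−1)(x−6) = x³ − 7x² + 6x` over `ℂ`. -/
noncomputable def E6 : WeierstrassCurve.Affine ℂ :=
  { a₁ := 0, a₂ := -7, a₃ := 0, a₄ := 6, a₆ := 0 }

lemma E6_a₁ : E6.a₁ = 0 := rfl
lemma E6_a₂ : E6.a₂ = -7 := rfl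
lemma E6_a₃ : E6.a₃ = 0 := rfl
lemma E6_a₄ : E6.a₄ = 6 := rfl
lemma E6_a₆ : E6.a₆ = 0 := rfl

lemma E6_negY (x y : ℂ) : E6.negY x y = -y := by
  simp [WeierstrassCurve.Affine.negY, E6_a₁, E6_a₃]

/-- A point is `Good k` if it is affine with x-coordinate of the shape `a / (2^k * b)`
with `a`, `b` odd integers. -/
def Good (k : ℕ) (pt : E6.Point) : Prop :=
  ∃ (x y : ℂ) (h' : E6.Nonsingular x y) (a b : ℤ),
    pt = WeierstrassCurve.Affine.Point.some _ _ h' ∧ Odd a ∧ Odd b ∧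
      x * ((2 : ℂ) ^ k * (b : ℂ)) = (a : ℂ)

lemma good_double {k : ℕ} (hk : 1 ≤ k) {pt : E6.Point} (h : Good k pt) :
    Good (k + 2) ((2 : ℤ) • pt) := by
  obtain ⟨x, y, h', a, b, rfl, ha, hb, hx⟩ := h
  set c : ℤ := 2 ^ k * b with hc
  have hcC : ((c : ℤ) : ℂ) = (2 : ℂ) ^ k * (b : ℂ) := by push_cast [hc]; ring
  have hxc : x * (c : ℂ) = (a : ℂ) := by rw [hcC]; exact hx
  have hbne : (b : ℤ) ≠ 0 := by rintro rfl; simp at hb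
  have hcne : (c : ℤ) ≠ 0 := mul_ne_zero (pow_ne_zero _ two_ne_zero) hbne
  have hcCne : (c : ℂ) ≠ 0 := Int.cast_ne_zero.mpr hcne
  -- the curve equation
  have heq : y ^ 2 = x ^ 3 - 7 * x ^ 2 + 6 * x := by
    have := ((WeierstrassCurve.Affine.nonsingular_iff _ _).mp h').1
    rw [WeierstrassCurve.Affine.equation_iff] at this
    rw [E6_a₁, E6_a₂, E6_a₃, E6_a₄, E6_a₆] at this
    linear_combination this
  obtain ⟨k', rfl⟩ : ∃ k', k = k' + 1 := ⟨k - 1, by omega⟩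
  have hceven : Even c := ⟨2 ^ k' * b, by rw [hc]; ring⟩
  have hanotte : ¬ Even a := Int.not_even_iff_odd.mpr ha
  -- x ≠ 0, 1, 6
  have hx0 : x ≠ 0 := by
    rintro rfl
    have hC : (a : ℂ) = ((0 : ℤ) : ℂ) := by rw [← hxc]; push_cast; ring
    have : a = 0 := Int.cast_injective hC
    exact hanotte (this ▸ Even.zero)
  have hx1 : x ≠ 1 := by
    rintro rfl
    have hC : (a : ℂ) = ((c : ℤ) : ℂ) := by rw [← hxc]; ring
    have : a = c := Int.cast_injective hC
    exact hanotte (this ▸ hceven)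
  have hx6 : x ≠ 6 := by
    rintro rfl
    have hC : (a : ℂ) = ((6 * c : ℤ) : ℂ) := by rw [← hxc]; push_cast; ring
    have : a = 6 * c := Int.cast_injective hC
    exact hanotte (this ▸ ⟨3 * c, by ring⟩)
  -- y ≠ 0
  have hyne0 : y ≠ 0 := by
    rintro rfl
    have h0 : x * (x - 1) * (x - 6) = 0 := by linear_combination -heq
    rcases mul_eq_zero.mp h0 with h0 | h0
    · rcases mul_eq_zero.mp h0 with h0 | h0
      · exact hx0 h0
      · exact hx1 (sub_eq_zero.mp h0)
    · exact hx6 (sub_eq_zero.mp h0)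
  have hyne : y ≠ E6.negY x y := by
    rw [E6_negY]
    intro hcon
    apply hyne0
    have : (2 : ℂ) * y = 0 := by linear_combination hcon
    simpa [two_ne_zero] using this
  have h2y : (2 : ℂ) * y ≠ 0 := mul_ne_zero two_ne_zero hyne0
  -- doubling
  have hdouble : (2 : ℤ) • (WeierstrassCurve.Affine.Point.some _ _ h') =
      WeierstrassCurve.Affine.Point.some _ _
        (WeierstrassCurve.Affine.nonsingular_add h' h' fun hxy => hyne hxy.right) := by
    rw [two_zsmul]
    exact WeierstrassCurve.Affine.Point.add_self_of_Y_ne hyne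
  set L : ℂ := E6.slope x x y y with hLdef
  have hLval : L = (3 * x ^ 2 - 14 * x + 6) / (2 * y) := by
    rw [hLdef, WeierstrassCurve.Affine.slope_of_Y_ne rfl hyne, E6_negY, E6_a₁, E6_a₂, E6_a₄]
    ring_nf
  have hL : L * (2 * y) = 3 * x ^ 2 - 14 * x + 6 := by
    rw [hLval, div_mul_cancel₀ _ h2y]
  have hx3 : (L ^ 2 + 7 - 2 * x) * (4 * y ^ 2) = (x ^ 2 - 6) ^ 2 := by
    linear_combination (L * (2 * y) + 3 * x ^ 2 - 14 * x + 6) * hL + (28 - 8 * x) * heq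
  refine ⟨_, _, _, (a ^ 2 - 6 * c ^ 2) ^ 2, a * (a - c) * (a - 6 * c) * b, hdouble,
    ?_, ?_, ?_⟩
  · exact ((ha.pow).sub_even ⟨3 * c ^ 2, by ring⟩).pow
  · exact ((ha.mul (ha.sub_even hceven)).mul (ha.sub_even ⟨3 * c, by ring⟩)).mul hb
  · -- the x-coordinate computation
    have hkey : (L ^ 2 + 7 - 2 * x) *
        (4 * (c : ℂ) * ((a : ℂ) * ((a : ℂ) - (c : ℂ)) * ((a : ℂ) - 6 * (c : ℂ)))) =
        ((a : ℂ) ^ 2 - 6 * (c : ℂ) ^ 2) ^ 2 := by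
      rw [← hxc]
      linear_combination (c : ℂ) ^ 4 * hx3 - 4 * (L ^ 2 + 7 - 2 * x) * (c : ℂ) ^ 4 * heq
    show E6.addX x x L * _ = _
    rw [WeierstrassCurve.Affine.addX, E6_a₁, E6_a₂]
    push_cast
    linear_combination hkey - 4 * (L ^ 2 + 7 - 2 * x) *
      ((a : ℂ) * ((a : ℂ) - (c : ℂ)) * ((a : ℂ) - 6 * (c : ℂ))) * hcC

lemma good_base (y₀ : ℂ) (hy : y₀ ^ 2 = -8) (h : E6.Nonsingular 2 y₀) :
    Good 3 ((2 : ℤ) • WeierstrassCurve.Affine.Point.some _ _ h) := by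
  have hyne0 : y₀ ≠ 0 := by
    rintro rfl; simp at hy
  have hyne : y₀ ≠ E6.negY 2 y₀ := by
    rw [E6_negY]
    intro hcon
    apply hyne0
    have : (2 : ℂ) * y₀ = 0 := by linear_combination hcon
    simpa [two_ne_zero] using this
  have h2y : (2 : ℂ) * y₀ ≠ 0 := mul_ne_zero two_ne_zero hyne0
  have hdouble : (2 : ℤ) • (WeierstrassCurve.Affine.Point.some _ _ h) =
      WeierstrassCurve.Affine.Point.some _ _
        (WeierstrassCurve.Affine.nonsingular_add h h fun hxy => hyne hxy.right) := by
    rw [two_zsmul]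
    exact WeierstrassCurve.Affine.Point.add_self_of_Y_ne hyne
  set L : ℂ := E6.slope 2 2 y₀ y₀ with hLdef
  have hLval : L = (-10) / (2 * y₀) := by
    rw [hLdef, WeierstrassCurve.Affine.slope_of_Y_ne rfl hyne, E6_negY, E6_a₁, E6_a₂, E6_a₄]
    ring_nf
  have hL : L * (2 * y₀) = -10 := by
    rw [hLval, div_mul_cancel₀ _ h2y]
  refine ⟨_, _, _, -1, 1, hdouble, ⟨-1, by ring⟩, ⟨0, by ring⟩, ?_⟩
  show E6.addX 2 2 L * _ = _
  rw [WeierstrassCurve.Affine.addX, E6_a₁, E6_a₂]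
  push_cast
  linear_combination (-(1 : ℂ)/4) * (2 * y₀ * L - 10) * hL + L ^ 2 * hy

lemma good_pow (y₀ : ℂ) (hy : y₀ ^ 2 = -8) (h : E6.Nonsingular 2 y₀) (m : ℕ) :
    Good (3 + 2 * m) (((2 : ℤ) ^ (m + 1)) • WeierstrassCurve.Affine.Point.some _ _ h) := by
  induction m with
  | zero => simpa using good_base y₀ hy h
  | succ m ih =>
    have hpt : ((2 : ℤ) ^ (m + 1 + 1)) • WeierstrassCurve.Affine.Point.some _ _ h =
        (2 : ℤ) • (((2 : ℤ) ^ (m + 1)) • WeierstrassCurve.Affine.Point.some _ _ h) := by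
      rw [← mul_smul]; congr 1; ring
    rw [show 3 + 2 * (m + 1) = (3 + 2 * m) + 2 by ring, hpt]
    exact good_double (by omega) ih

lemma good_inj {k₁ k₂ : ℕ} {pt : E6.Point} (h₁ : Good k₁ pt) (h₂ : Good k₂ pt)
    (hlt : k₁ < k₂) : False := by
  obtain ⟨x₁, y₁, hns₁, a₁, b₁, rfl, ha₁, hb₁, hx₁⟩ := h₁
  obtain ⟨x₂, y₂, hns₂, a₂, b₂, heq, ha₂, hb₂, hx₂⟩ := h₂
  injection heq with hx hy
  subst hx
  -- a₁ * 2^k₂ * b₂ = a₂ * 2^k₁ * b₁ in ℤ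
  have hC : (a₁ : ℂ) * ((2 : ℂ) ^ k₂ * (b₂ : ℂ)) = (a₂ : ℂ) * ((2 : ℂ) ^ k₁ * (b₁ : ℂ)) := by
    rw [← hx₁, ← hx₂]; ring
  have hZ : a₁ * 2 ^ k₂ * b₂ = a₂ * 2 ^ k₁ * b₁ := by
    have hZC : ((a₁ * 2 ^ k₂ * b₂ : ℤ) : ℂ) = ((a₂ * 2 ^ k₁ * b₁ : ℤ) : ℂ) := by
      push_cast
      linear_combination hC
    exact_mod_cast hZC
  obtain ⟨d, rfl⟩ : ∃ d, k₂ = k₁ + (d + 1) := ⟨k₂ - k₁ - 1, by omega⟩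
  have h2 : (2 : ℤ) ^ k₁ * (2 ^ (d + 1) * a₁ * b₂ - a₂ * b₁) = 0 := by
    rw [mul_sub, sub_eq_zero]
    linear_combination hZ
  have h3 : 2 ^ (d + 1) * a₁ * b₂ - a₂ * b₁ = 0 :=
    (mul_eq_zero.mp h2).resolve_left (pow_ne_zero _ two_ne_zero)
  have heven : Even (a₂ * b₁) := by
    have : a₂ * b₁ = 2 ^ (d + 1) * a₁ * b₂ := by linarith
    exact this ▸ ⟨2 ^ d * a₁ * b₂, by ring⟩
  exact Int.not_even_iff_odd.mpr (ha₂.mul hb₁) heven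

/-- On the Legendre curve `E₆ : y² = x(x−1)(x−6)` over `ℂ`, any point
`P = (2, y₀)` with `y₀² = −8` has infinite order: for every nonzero integer `n`,
the multiple `n • P` is not the point at infinity. -/
theorem E6_point_infinite_order (y₀ : ℂ) (hy : y₀ ^ 2 = -8)
    (h : E6.Nonsingular 2 y₀) (n : ℤ) (hn : n ≠ 0) :
    n • (WeierstrassCurve.Affine.Point.some _ _ h) ≠ (0 : E6.Point) := by
  intro hcon
  set P : E6.Point := WeierstrassCurve.Affine.Point.some _ _ h with hP
  set N : ℕ := n.natAbs with hN
  have hNne : N ≠ 0 := Int.natAbs_ne_zero.mpr hn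
  have hNP : (N : ℤ) • P = 0 := by
    rcases Int.natAbs_eq n with he | he
    · rw [← he]; exact hcon
    · rw [show (N : ℤ) = -n by omega, neg_smul, hcon, neg_zero]
  haveI : NeZero N := ⟨hNne⟩
  -- pigeonhole on powers of two mod N
  have hnotinj : ¬ Function.Injective (fun i : Fin (N + 1) => (2 : ZMod N) ^ (i : ℕ)) := by
    intro hinj
    have hcard := Fintype.card_le_of_injective _ hinj
    rw [Fintype.card_fin, ZMod.card] at hcard
    omega
  rw [Function.not_injective_iff] at hnotinj
  obtain ⟨i, j, hij, hne⟩ := hnotinj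
  -- wlog i < j
  wlog hlt : (i : ℕ) < (j : ℕ) generalizing i j
  · have hne' : (i : ℕ) ≠ (j : ℕ) := fun hc => hne (Fin.ext hc)
    exact this j i hij.symm (Ne.symm hne) (by omega)
  -- N divides 2^j - 2^i
  have hdvd : (N : ℤ) ∣ 2 ^ (j : ℕ) - 2 ^ (i : ℕ) := by
    have : ((2 ^ (j : ℕ) - 2 ^ (i : ℕ) : ℤ) : ZMod N) = 0 := by
      push_cast
      rw [hij]
      ring
    exact_mod_cast (ZMod.intCast_zmod_eq_zero_iff_dvd _ _).mp this
  obtain ⟨t, ht⟩ := hdvd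
  have hQeq : ((2 : ℤ) ^ ((i : ℕ) + 1)) • P = ((2 : ℤ) ^ ((j : ℕ) + 1)) • P := by
    have hdiff : ((2 : ℤ) ^ ((j : ℕ) + 1) - (2 : ℤ) ^ ((i : ℕ) + 1)) • P = 0 := by
      have : (2 : ℤ) ^ ((j : ℕ) + 1) - (2 : ℤ) ^ ((i : ℕ) + 1) = (2 * t) * (N : ℤ) := by
        rw [pow_succ, pow_succ]
        linarith [ht]
      rw [this, mul_smul, hNP]
      exact zsmul_zero _
    have := sub_smul ((2 : ℤ) ^ ((j : ℕ) + 1)) ((2 : ℤ) ^ ((i : ℕ) + 1)) P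
    rw [hdiff] at this
    have := sub_eq_zero.mp this.symm
    exact this.symm
  have g₁ := good_pow y₀ hy h (i : ℕ)
  have g₂ := good_pow y₀ hy h (j : ℕ)
  rw [← hP] at g₁ g₂
  rw [hQeq] at g₁
  exact good_inj g₁ g₂ (by omega)
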